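/- Let k be a field of characteristic 0, let m ≥ 1 be an integer, and let g be a finite-dimensional Lie algebra over k equipped with a ℤ/m-grading (g_i)_{i ∈ ℤ/m}. Let δ ∈ ℤ/m and suppose x ∈ g_δ, h ∈ g_0, f ∈ g_{-δ} satisfy [h, x] = 2·x, [h, f] = −2·f and [x, f] = h. For n ∈ ℤ let g^{(n)} = {y ∈ g : [h, y] = n·y} (the n-eigenspace of ad(h), with n viewed as an element of k). Then for every y ∈ g_δ lying in the sum Σ_{n ≥ 2} g^{(n)} there exists z ∈ g_0 lying in the sum Σ_{n ≥ 0} g^{(n)} such that [x, z] = y. (The surjectivity of ad(x) : p^x_0 → p^x_η established in the proof of 2.9(e).) -/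

import Mathlib

open Module Finset

section Sl2Helpers

variable {k : Type*} [Field k] {L : Type*} [AddCommGroup L] [Module k L]

/-- Coefficients for the explicit preimage under `E` in an `sl₂`-triple action. -/
noncomputable def sl2Coeff (k : Type*) [Field k] (n : ℤ) : ℕ → k
  | 0 => ((n : k))⁻¹
  | j + 1 => -(sl2Coeff k n j) / (((j : k) + 2) * ((n : k) + (j : k) + 1))

variable [CharZero k]

lemma sl2Coeff_zero_mul {n : ℤ} (hn : 1 ≤ n) : sl2Coeff k n 0 * (n : k) = 1 := by
  have h : (n : k) ≠ 0 := Int.cast_ne_zero.mpr (by omega)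
  simp [sl2Coeff, inv_mul_cancel₀ h]

lemma sl2Coeff_succ_mul {n : ℤ} (hn : 1 ≤ n) (j : ℕ) :
    sl2Coeff k n (j + 1) * (((j : k) + 2) * ((n : k) + (j : k) + 1)) = -sl2Coeff k n j := by
  have h1 : ((j : k) + 2) ≠ 0 := by
    have h : (((j + 2 : ℕ) : k)) ≠ 0 := Nat.cast_ne_zero.mpr (by omega)
    push_cast at h
    exact h
  have h2 : ((n : k) + (j : k) + 1) ≠ 0 := by
    have h : (((n + j + 1 : ℤ) : k)) ≠ 0 := Int.cast_ne_zero.mpr (by omega)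
    push_cast at h
    exact h
  rw [sl2Coeff]
  field_simp

variable (E H F : Module.End k L)

lemma eig_pow_E (hHE : ∀ w, H (E w) = E (H w) + (2 : k) • E w)
    (c : k) (v : L) (hv : H v = c • v) : ∀ j : ℕ,
    H ((E ^ j) v) = (c + 2 * j) • (E ^ j) v := by
  intro j
  induction j with
  | zero => simpa using hv
  | succ j ih =>
    have h1 : (E ^ (j + 1)) v = E ((E ^ j) v) := by
      rw [pow_succ']; rfl
    rw [h1, hHE, ih, map_smul]
    push_cast
    module

lemma eig_pow_F (hHF : ∀ w, H (F w) = F (H w) - (2 : k) • F w)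
    (c : k) (v : L) (hv : H v = c • v) : ∀ j : ℕ,
    H ((F ^ j) v) = (c - 2 * j) • (F ^ j) v := by
  intro j
  induction j with
  | zero => simpa using hv
  | succ j ih =>
    have h1 : (F ^ (j + 1)) v = F ((F ^ j) v) := by
      rw [pow_succ']; rfl
    rw [h1, hHF, ih, map_smul]
    push_cast
    module

lemma E_pow_F (hHF : ∀ w, H (F w) = F (H w) - (2 : k) • F w)
    (hEF : ∀ w, E (F w) = F (E w) + H w) : ∀ (j : ℕ) (c : k) (v : L), H v = c • v →
    E ((F ^ (j + 1)) v) = (F ^ (j + 1)) (E v) + (((j : k) + 1) * (c - j)) • (F ^ j) v := by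
  intro j
  induction j with
  | zero =>
    intro c v hv
    simp only [zero_add, pow_one, pow_zero, Module.End.one_apply, Nat.cast_zero]
    rw [hEF, hv]
    match_scalars <;> ring
  | succ j ih =>
    intro c v hv
    have hFv : H (F v) = (c - 2) • F v := by
      rw [hHF, hv, map_smul]; module
    have h1 : (F ^ (j + 2)) v = (F ^ (j + 1)) (F v) := by
      rw [pow_succ]; rfl
    have h2 : (F ^ (j + 1)) v = (F ^ j) (F v) := by
      rw [pow_succ]; rfl
    rw [h1, ih (c - 2) (F v) hFv, hEF v, hv, map_add, map_smul]
    have h3 : (F ^ (j + 1)) (F (E v)) = (F ^ (j + 2)) (E v) := by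
      rw [pow_succ]; rfl
    rw [h3, ← h2]
    push_cast
    match_scalars <;> ring

/-- Explicit surjectivity: an eigenvector of `H` with integer eigenvalue `n ≥ 1`,
killed by a power of `E`, lies in the image of `E` of the `(n-2)`-eigenspace. -/
lemma sl2_lift (hHE : ∀ w, H (E w) = E (H w) + (2 : k) • E w)
    (hHF : ∀ w, H (F w) = F (H w) - (2 : k) • F w)
    (hEF : ∀ w, E (F w) = F (E w) + H w)
    (n : ℤ) (hn : 1 ≤ n) (v : L) (hv : H v = (n : k) • v)
    (r : ℕ) (hr : (E ^ r) v = 0) :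
    ∃ u, H u = ((n - 2 : ℤ) : k) • u ∧ E u = v := by
  cases r with
  | zero =>
    refine ⟨0, by simp, ?_⟩
    simp only [pow_zero, Module.End.one_apply] at hr
    simp [hr]
  | succ r =>
    set a : ℕ → k := sl2Coeff k n with ha
    set s : ℕ → L := fun j => (F ^ j) ((E ^ j) v) with hs
    refine ⟨∑ j ∈ range (r + 1), a j • (F ^ (j + 1)) ((E ^ j) v), ?_, ?_⟩
    · rw [map_sum, Finset.smul_sum]
      refine Finset.sum_congr rfl fun j _ => ?_
      rw [map_smul]
      have hEj : H ((E ^ j) v) = ((n : k) + 2 * j) • (E ^ j) v :=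
        eig_pow_E E H hHE _ v hv j
      have := eig_pow_F H F hHF ((n : k) + 2 * j) ((E ^ j) v) hEj (j + 1)
      rw [this]
      push_cast
      match_scalars
      ring
    · rw [map_sum]
      have hterm : ∀ j, E (a j • (F ^ (j + 1)) ((E ^ j) v)) =
          a j • s (j + 1) + (a j * (((j : k) + 1) * ((n : k) + j))) • s j := by
        intro j
        rw [map_smul]
        have hEj : H ((E ^ j) v) = ((n : k) + 2 * j) • (E ^ j) v :=
          eig_pow_E E H hHE _ v hv j
        rw [E_pow_F E H F hHF hEF j ((n : k) + 2 * j) ((E ^ j) v) hEj]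
        have hE1 : E ((E ^ j) v) = (E ^ (j + 1)) v := by
          rw [pow_succ']; rfl
        rw [hE1]
        have : ((n : k) + 2 * j - j) = ((n : k) + j) := by ring
        rw [this]
        simp only [hs, smul_add, smul_smul]
      rw [Finset.sum_congr rfl fun j _ => hterm j, Finset.sum_add_distrib]
      have hsr : s (r + 1) = 0 := by
        simp only [hs, hr, map_zero]
      rw [Finset.sum_range_succ (fun j => a j • s (j + 1)) r, hsr, smul_zero, add_zero]
      rw [Finset.sum_range_succ' (fun j => (a j * (((j : k) + 1) * ((n : k) + j))) • s j) r]
      have hzero : (a 0 * ((((0 : ℕ) : k) + 1) * ((n : k) + ((0 : ℕ) : k)))) • s 0 = v := by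
        have hc : a 0 * ((((0 : ℕ) : k) + 1) * ((n : k) + ((0 : ℕ) : k))) = 1 := by
          have := sl2Coeff_zero_mul (k := k) hn
          rw [ha]
          push_cast
          linear_combination this
        simp only [hs, pow_zero, Module.End.one_apply, hc, one_smul]
      have hsucc : ∀ j, (a (j + 1) * (((((j + 1 : ℕ)) : k) + 1) * ((n : k) + (((j + 1 : ℕ)) : k)))) • s (j + 1)
          = -(a j • s (j + 1)) := by
        intro j
        rw [← neg_smul]
        congr 1
        have := sl2Coeff_succ_mul (k := k) hn j
        rw [ha]
        push_cast
        linear_combination this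
      rw [Finset.sum_congr rfl fun j _ => hsucc j, hzero, Finset.sum_neg_distrib]
      abel

lemma exists_pow_apply_eq_zero [Module.Finite k L]
    (hHE : ∀ w, H (E w) = E (H w) + (2 : k) • E w)
    (n : ℤ) (v : L) (hv : H v = (n : k) • v) :
    ∃ r : ℕ, (E ^ r) v = 0 := by
  by_contra hc
  push_neg at hc
  have hev : ∀ j : Fin (finrank k L + 1),
      H.HasEigenvector (((n + 2 * (j : ℕ) : ℤ) : k)) ((E ^ (j : ℕ)) v) := by
    intro j
    refine ⟨Module.End.mem_eigenspace_iff.mpr ?_, hc _⟩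
    have := eig_pow_E E H hHE ((n : k)) v hv (j : ℕ)
    rw [this]
    push_cast
    ring_nf
  have hinj : Function.Injective
      (fun j : Fin (finrank k L + 1) => ((n + 2 * (j : ℕ) : ℤ) : k)) := by
    intro j1 j2 hj
    simp only [Int.cast_inj] at hj
    exact Fin.ext (by omega)
  have hli := H.eigenvectors_linearIndependent' _ hinj _ hev
  have := hli.fintype_card_le_finrank
  simp only [Fintype.card_fin] at this
  omega

end Sl2Helpers

lemma lie_finset_sum {L : Type*} [LieRing L] {ι : Type*} (s : Finset ι) (b : L) (F : ι → L) :
    ⁅b, ∑ i ∈ s, F i⁆ = ∑ i ∈ s, ⁅b, F i⁆ := by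
  induction s using Finset.cons_induction with
  | empty => simp
  | cons a s ha ih => simp [Finset.sum_cons, lie_add, ih]

theorem ad_surjective_on_spiral
    (k : Type*) [Field k] [CharZero k]
    (L : Type*) [LieRing L] [LieAlgebra k L] [Module.Finite k L]
    (m : ℕ) (hm : 1 ≤ m)
    (g : ZMod m → Submodule k L)
    (hdecomp : DirectSum.IsInternal g)
    (hbracket : ∀ i j : ZMod m, ∀ x ∈ g i, ∀ y ∈ g j, ⁅x, y⁆ ∈ g (i + j))
    (δ : ZMod m) (x h f : L)
    (hx : x ∈ g δ) (hh : h ∈ g (0 : ZMod m)) (hf : f ∈ g (-δ))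
    (hhx : ⁅h, x⁆ = (2 : k) • x) (hhf : ⁅h, f⁆ = (-2 : k) • f) (hxf : ⁅x, f⁆ = h)
    (y : L) (hy : y ∈ g δ)
    (hy2 : y ∈ ⨆ n ∈ {n : ℤ | 2 ≤ n},
      Module.End.eigenspace (LieAlgebra.ad k L h) ((n : k))) :
    ∃ z ∈ g (0 : ZMod m),
      z ∈ (⨆ n ∈ {n : ℤ | 0 ≤ n},
        Module.End.eigenspace (LieAlgebra.ad k L h) ((n : k))) ∧ ⁅x, z⁆ = y := by
  classical
  letI : DirectSum.Decomposition g := hdecomp.chooseDecomposition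
  set E : Module.End k L := LieAlgebra.ad k L x with hE
  set H : Module.End k L := LieAlgebra.ad k L h with hH
  set F : Module.End k L := LieAlgebra.ad k L f with hF
  have hHE : ∀ w, H (E w) = E (H w) + (2 : k) • E w := by
    intro w
    simp only [hE, hH, LieAlgebra.ad_apply]
    rw [leibniz_lie, hhx, smul_lie]
    abel
  have hHF : ∀ w, H (F w) = F (H w) - (2 : k) • F w := by
    intro w
    simp only [hF, hH, LieAlgebra.ad_apply]
    rw [leibniz_lie, hhf, smul_lie]
    module
  have hEF : ∀ w, E (F w) = F (E w) + H w := by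
    intro w
    simp only [hE, hF, hH, LieAlgebra.ad_apply]
    rw [leibniz_lie, hxf]
    abel
  -- step 1: find a preimage in the sum of nonnegative eigenspaces
  have main : ∀ w ∈ (⨆ n ∈ {n : ℤ | 2 ≤ n}, Module.End.eigenspace H ((n : k))),
      ∃ z ∈ (⨆ n ∈ {n : ℤ | 0 ≤ n}, Module.End.eigenspace H ((n : k))), ⁅x, z⁆ = w := by
    intro w hw
    rw [iSup_subtype'] at hw
    refine Submodule.iSup_induction _ (motive := fun w => ∃ z ∈ (⨆ n ∈ {n : ℤ | 0 ≤ n},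
      Module.End.eigenspace H ((n : k))), ⁅x, z⁆ = w) hw ?_ ?_ ?_
    · rintro ⟨n, hn2⟩ v hv
      have hn2' : (2 : ℤ) ≤ n := hn2
      have hv' : H v = ((n : ℤ) : k) • v := Module.End.mem_eigenspace_iff.mp hv
      obtain ⟨r, hr⟩ := exists_pow_apply_eq_zero E H hHE n v hv'
      obtain ⟨u, hu1, hu2⟩ := sl2_lift E H F hHE hHF hEF n (by omega) v hv' r hr
      refine ⟨u, ?_, ?_⟩
      · have hmem : u ∈ Module.End.eigenspace H (((n - 2 : ℤ) : k)) :=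
          Module.End.mem_eigenspace_iff.mpr hu1
        exact Submodule.mem_iSup_of_mem (n - 2)
          (Submodule.mem_iSup_of_mem (by simp only [Set.mem_setOf_eq]; omega) hmem)
      · rw [← LieAlgebra.ad_apply (R := k), ← hE, hu2]
    · exact ⟨0, Submodule.zero_mem _, lie_zero x⟩
    · rintro w1 w2 ⟨z1, hz1, hxz1⟩ ⟨z2, hz2, hxz2⟩
      exact ⟨z1 + z2, Submodule.add_mem _ hz1 hz2, by rw [lie_add, hxz1, hxz2]⟩
  obtain ⟨z', hz'sup, hz'⟩ := main y hy2
  -- step 2: project onto the grading component `g 0`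
  set P : ZMod m → (L →ₗ[k] L) := fun c =>
    (g c).subtype ∘ₗ (DFinsupp.lapply c) ∘ₗ (DirectSum.decomposeLinearEquiv g).toLinearMap
    with hP
  have hPapply : ∀ (c : ZMod m) (w : L), P c w = (DirectSum.decompose g w c : L) := by
    intro c w; rfl
  have hPmem : ∀ (c : ZMod m) (w : L), P c w ∈ g c := by
    intro c w; rw [hPapply]; exact SetLike.coe_mem _
  have proj_bracket : ∀ (b : L) (j : ZMod m), b ∈ g j → ∀ (i : ZMod m) (w : L),
      P (j + i) ⁅b, w⁆ = ⁅b, P i w⁆ := by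
    intro b j hb i w
    conv_lhs => rw [← DirectSum.sum_support_decompose g w]
    rw [lie_finset_sum, map_sum]
    rw [Finset.sum_eq_single i]
    · rw [hPapply, hPapply]
      exact DirectSum.decompose_of_mem_same g
        (hbracket j i b hb _ (SetLike.coe_mem _))
    · intro i' _ hne
      rw [hPapply]
      exact DirectSum.decompose_of_mem_ne g
        (hbracket j i' b hb _ (SetLike.coe_mem _)) (by
          intro hcon
          exact hne (by
            have := add_left_cancel hcon
            exact this))
    · intro hi
      rw [DFinsupp.notMem_support_iff.mp hi]
      simp
  have hPcommH : ∀ (i : ZMod m) (w : L), H (P i w) = P i (H w) := by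
    intro i w
    have := proj_bracket h 0 hh i w
    rw [zero_add] at this
    simp only [hH, LieAlgebra.ad_apply]
    exact this.symm
  have hP0sup : P 0 z' ∈ (⨆ n ∈ {n : ℤ | 0 ≤ n}, Module.End.eigenspace H ((n : k))) := by
    rw [iSup_subtype'] at hz'sup ⊢
    refine Submodule.iSup_induction _ (motive := fun w => P 0 w ∈ ⨆ (n : {n : ℤ | 0 ≤ n}),
      Module.End.eigenspace H (((n : ℤ) : k))) hz'sup ?_ ?_ ?_
    · intro n v hv
      have hv' : H v = ((n : ℤ) : k) • v := Module.End.mem_eigenspace_iff.mp hv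
      have : H (P 0 v) = ((n : ℤ) : k) • P 0 v := by
        rw [hPcommH, hv', map_smul]
      exact le_iSup (fun (n : {n : ℤ | 0 ≤ n}) =>
        Module.End.eigenspace H (((n : ℤ) : k))) n (Module.End.mem_eigenspace_iff.mpr this)
    · simp
    · intro w1 w2 h1 h2
      rw [map_add]
      exact Submodule.add_mem _ h1 h2
  refine ⟨P 0 z', hPmem 0 z', hP0sup, ?_⟩
  have := proj_bracket x δ hx 0 z'
  rw [add_zero] at this
  rw [← this, hz', hPapply]
  exact DirectSum.decompose_of_mem_same g hy
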